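/- Suppose a loss functional decomposes over orders as I = Σ_{q=0}^{s} C(s,q) J(q) with all J(q) ≥ 0, and dropout with keep-probability p replaces s by r ~ Binomial(s,p). Then the expected dropped interaction E_r[Σ_{q=0}^{r} C(r,q) J(q)] ≤ Σ_{q=0}^{s} C(s,q) J(q), with equality when p = 1. -/

import Mathlib

open BigOperators Finset

lemma inner_mono (s r : ℕ) (hr : r ≤ s) (J : ℕ → ℝ) (hJ : ∀ q, 0 ≤ J q) :
    (∑ q ∈ Finset.range (r + 1), (r.choose q : ℝ) * J q) ≤
      ∑ q ∈ Finset.range (s + 1), (s.choose q : ℝ) * J q := by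
  calc (∑ q ∈ Finset.range (r + 1), (r.choose q : ℝ) * J q)
      ≤ ∑ q ∈ Finset.range (r + 1), (s.choose q : ℝ) * J q := by
        apply Finset.sum_le_sum
        intro q _
        exact mul_le_mul_of_nonneg_right (by exact_mod_cast Nat.choose_le_choose q hr) (hJ q)
    _ ≤ ∑ q ∈ Finset.range (s + 1), (s.choose q : ℝ) * J q := by
        apply Finset.sum_le_sum_of_subset_of_nonneg
        · exact Finset.range_subset_range.mpr (by omega)
        · intro q _ _
          exact mul_nonneg (Nat.cast_nonneg _) (hJ q)

lemma weights_sum (s : ℕ) (p : ℝ) :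
    (∑ r ∈ Finset.range (s + 1), (s.choose r : ℝ) * p ^ r * (1 - p) ^ (s - r)) = 1 := by
  calc (∑ r ∈ Finset.range (s + 1), (s.choose r : ℝ) * p ^ r * (1 - p) ^ (s - r))
      = (p + (1 - p)) ^ s := by
        rw [add_pow]
        exact Finset.sum_congr rfl (fun r _ => by ring)
    _ = 1 := by norm_num

theorem expected_dropout_interaction_le (s : ℕ) (p : ℝ)
    (hp0 : 0 ≤ p) (hp1 : p ≤ 1) (J : ℕ → ℝ) (hJ : ∀ q, 0 ≤ J q) :
    (∑ r ∈ Finset.range (s + 1),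
        (s.choose r : ℝ) * p ^ r * (1 - p) ^ (s - r) *
          ∑ q ∈ Finset.range (r + 1), (r.choose q : ℝ) * J q) ≤
      (∑ q ∈ Finset.range (s + 1), (s.choose q : ℝ) * J q) ∧
    (p = 1 →
      (∑ r ∈ Finset.range (s + 1),
          (s.choose r : ℝ) * p ^ r * (1 - p) ^ (s - r) *
            ∑ q ∈ Finset.range (r + 1), (r.choose q : ℝ) * J q) =
        ∑ q ∈ Finset.range (s + 1), (s.choose q : ℝ) * J q) := by
  set M := ∑ q ∈ Finset.range (s + 1), (s.choose q : ℝ) * J q with hM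
  have hw : ∀ r ∈ Finset.range (s + 1),
      0 ≤ (s.choose r : ℝ) * p ^ r * (1 - p) ^ (s - r) := by
    intro r _
    have := pow_nonneg hp0 r
    have := pow_nonneg (by linarith : (0:ℝ) ≤ 1 - p) (s - r)
    positivity
  constructor
  · calc (∑ r ∈ Finset.range (s + 1),
        (s.choose r : ℝ) * p ^ r * (1 - p) ^ (s - r) *
          ∑ q ∈ Finset.range (r + 1), (r.choose q : ℝ) * J q)
        ≤ ∑ r ∈ Finset.range (s + 1),
            (s.choose r : ℝ) * p ^ r * (1 - p) ^ (s - r) * M := by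
          apply Finset.sum_le_sum
          intro r hr
          exact mul_le_mul_of_nonneg_left
            (inner_mono s r (by simpa using Nat.lt_succ_iff.mp (Finset.mem_range.mp hr)) J hJ)
            (hw r hr)
      _ = M := by rw [← Finset.sum_mul, weights_sum s p, one_mul]
  · intro hp
    subst hp
    rw [Finset.sum_eq_single s]
    · simp [hM]
    · intro r hr hne
      have : s - r ≠ 0 := by
        have := Finset.mem_range.mp hr; omega
      simp [this, zero_pow this]
    · intro h; exact absurd (Finset.self_mem_range_succ s) h
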